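/- Let A, B be n×n positive definite complex matrices with all eigenvalues of A and B lying in [m, M] for some 0 < m ≤ M, X an n×n complex matrix, and τ, ν ∈ (0,1) with ν ≤ min{τ,1-τ} or ν ≥ max{τ,1-τ}. Then ‖AX + XB‖₂ ≤ ((M+m)/(2√(mM)))^{ν(1-ν)/(τ(1-τ))} · ‖A^ν X B^{1-ν} + A^{1-ν} X B^ν‖₂. -/

import Mathlib

open Matrix ComplexOrder

/-- Real power of a matrix, defined via the spectral decomposition when the
matrix is Hermitian (and junk value `0` otherwise). -/
noncomputable def mpow {n : ℕ} (A : Matrix (Fin n) (Fin n) ℂ) (t : ℝ) :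
    Matrix (Fin n) (Fin n) ℂ :=
  if hA : A.IsHermitian then
    (hA.eigenvectorUnitary : Matrix (Fin n) (Fin n) ℂ) *
      Matrix.diagonal (fun i => ((hA.eigenvalues i ^ t : ℝ) : ℂ)) *
      (star hA.eigenvectorUnitary : Matrix (Fin n) (Fin n) ℂ)
  else 0

/-- The Hilbert–Schmidt (Frobenius) norm, `‖Y‖₂ = √(tr (Y Yᴴ))`. -/
noncomputable def hsNorm {n : ℕ} (Y : Matrix (Fin n) (Fin n) ℂ) : ℝ :=
  Real.sqrt (Matrix.trace (Y * Yᴴ)).re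


section aux
open Real

-- G(u) = sinh(ku) cosh u - k sinh u cosh(ku) ≥ 0 for u ≥ 0, k ∈ [0,1]
lemma sinh_cosh_aux (k : ℝ) (hk0 : 0 ≤ k) (hk1 : k ≤ 1) :
    ∀ u : ℝ, 0 ≤ u → k * sinh u * cosh (k*u) ≤ sinh (k*u) * cosh u := by
  have hder : ∀ x : ℝ, HasDerivAt (fun u => sinh (k*u) * cosh u - k * sinh u * cosh (k*u))
      ((1 - k^2) * sinh (k*x) * sinh x) x := by
    intro x
    have h1 : HasDerivAt (fun u : ℝ => k * u) k x := by
      simpa using (hasDerivAt_id x).const_mul k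
    have h2 : HasDerivAt (fun u => sinh (k*u)) (cosh (k*x) * k) x :=
      (Real.hasDerivAt_sinh (k*x)).comp x h1
    have h3 : HasDerivAt (fun u => cosh (k*u)) (sinh (k*x) * k) x :=
      (Real.hasDerivAt_cosh (k*x)).comp x h1
    have h4 := (h2.mul (Real.hasDerivAt_cosh x)).sub
      (((Real.hasDerivAt_sinh x).const_mul k).mul h3)
    refine h4.congr_deriv ?_
    have := Real.cosh_sq_sub_sinh_sq x
    have := Real.cosh_sq_sub_sinh_sq (k*x)
    ring_nf

  intro u hu
  have hmono : MonotoneOn (fun u => sinh (k*u) * cosh u - k * sinh u * cosh (k*u)) (Set.Ici 0) := by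
    apply monotoneOn_of_deriv_nonneg (convex_Ici 0)
    · exact (Continuous.continuousOn (by continuity))
    · intro x hx
      exact (hder x).differentiableAt.differentiableWithinAt
    · intro x hx
      rw [(hder x).deriv]
      have hx0 : 0 < x := by simpa using hx
      have h5 : 0 ≤ sinh x := Real.sinh_nonneg_iff.mpr hx0.le
      have h6 : 0 ≤ sinh (k*x) := Real.sinh_nonneg_iff.mpr (by positivity)
      have h7 : 0 ≤ 1 - k^2 := by nlinarith
      exact mul_nonneg (mul_nonneg h7 h6) h5
  have := hmono (Set.self_mem_Ici) (Set.mem_Ici.mpr hu) hu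
  simp at this
  linarith

lemma log_cosh_aux (k : ℝ) (hk0 : 0 ≤ k) (hk1 : k ≤ 1) :
    ∀ u : ℝ, 0 ≤ u → k^2 * Real.log (cosh u) ≤ Real.log (cosh (k*u)) := by
  have hder : ∀ x : ℝ, HasDerivAt (fun u => Real.log (cosh (k*u)) - k^2 * Real.log (cosh u))
      (sinh (k*x) * k / cosh (k*x) - k^2 * (sinh x / cosh x)) x := by
    intro x
    have h1 : HasDerivAt (fun u : ℝ => k * u) k x := by
      simpa using (hasDerivAt_id x).const_mul k
    have h3 : HasDerivAt (fun u => cosh (k*u)) (sinh (k*x) * k) x :=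
      (Real.hasDerivAt_cosh (k*x)).comp x h1
    exact (h3.log (Real.cosh_pos _).ne').sub
      (((Real.hasDerivAt_cosh x).log (Real.cosh_pos _).ne').const_mul (k^2))
  have hmono : MonotoneOn (fun u => Real.log (cosh (k*u)) - k^2 * Real.log (cosh u))
      (Set.Ici 0) := by
    apply monotoneOn_of_deriv_nonneg (convex_Ici 0)
    · exact (Differentiable.continuous (fun x => (hder x).differentiableAt)).continuousOn
    · intro x hx
      exact (hder x).differentiableAt.differentiableWithinAt
    · intro x hx
      rw [(hder x).deriv]
      have hx0 : 0 < x := by simpa using hx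
      have hG := sinh_cosh_aux k hk0 hk1 x hx0.le
      have hc1 : 0 < cosh (k*x) := Real.cosh_pos _
      have hc2 : 0 < cosh x := Real.cosh_pos _
      rw [sub_nonneg, mul_div_assoc' (k^2), div_le_div_iff₀ hc2 hc1, mul_comm (sinh (k*x)) k]
      calc k^2 * (sinh x) * cosh (k*x) = k * (k * sinh x * cosh (k*x)) := by ring
        _ ≤ k * (sinh (k*x) * cosh x) := by
            exact mul_le_mul_of_nonneg_left hG hk0
        _ = k * sinh (k*x) * cosh x := by ring
  intro u hu
  have := hmono (Set.self_mem_Ici) (Set.mem_Ici.mpr hu) hu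
  simp only [mul_zero, Real.cosh_zero, Real.log_one, sub_zero, mul_zero, sub_self] at this
  linarith [this]

lemma cosh_rpow_le (k u : ℝ) (hk0 : 0 ≤ k) (hk1 : k ≤ 1) (hu : 0 ≤ u) :
    cosh u ^ (k^2) ≤ cosh (k*u) := by
  rw [Real.rpow_def_of_pos (Real.cosh_pos _)]
  calc Real.exp (Real.log (cosh u) * k^2) ≤ Real.exp (Real.log (cosh (k*u))) := by
        apply Real.exp_le_exp.mpr
        rw [mul_comm]
        exact log_cosh_aux k hk0 hk1 u hu
    _ = cosh (k*u) := Real.exp_log (Real.cosh_pos _)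

lemma kantorovich (m M a b : ℝ) (hm : 0 < m) (ham : m ≤ a) (haM : a ≤ M)
    (hbm : m ≤ b) (hbM : b ≤ M) :
    (a + b) * Real.sqrt (m*M) ≤ (M + m) * Real.sqrt (a*b) := by
  have ha : 0 < a := hm.trans_le ham
  have hb : 0 < b := hm.trans_le hbm
  have hM : 0 < M := ha.trans_le haM
  have h1 : Real.sqrt ((a+b)^2 * (m*M)) = (a+b) * Real.sqrt (m*M) := by
    rw [show (a+b)^2*(m*M) = ((a+b)*Real.sqrt (m*M))^2 by
      rw [mul_pow, Real.sq_sqrt (by positivity)], Real.sqrt_sq (by positivity)]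
  have h2 : Real.sqrt ((M+m)^2 * (a*b)) = (M+m) * Real.sqrt (a*b) := by
    rw [show (M+m)^2*(a*b) = ((M+m)*Real.sqrt (a*b))^2 by
      rw [mul_pow, Real.sq_sqrt (by positivity)], Real.sqrt_sq (by positivity)]
  rw [← h1, ← h2]
  apply Real.sqrt_le_sqrt
  have e1 : m * a ≤ M * b := by nlinarith
  have e2 : m * b ≤ M * a := by nlinarith
  nlinarith [mul_nonneg (sub_nonneg.mpr e1) (sub_nonneg.mpr e2)]

lemma scalar_main (m M a b ν r : ℝ) (hm : 0 < m)
    (ham : m ≤ a) (haM : a ≤ M) (hbm : m ≤ b) (hbM : b ≤ M)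
    (hν0 : 0 < ν) (hν1 : ν < 1) (hr : 4*(ν*(1-ν)) ≤ r) :
    a + b ≤ ((M+m)/(2*Real.sqrt (m*M))) ^ r * (a ^ ν * b ^ (1-ν) + a ^ (1-ν) * b ^ ν) := by
  have ha : 0 < a := hm.trans_le ham
  have hb : 0 < b := hm.trans_le hbm
  have hM : 0 < M := ha.trans_le haM
  set K : ℝ := (M+m)/(2*Real.sqrt (m*M)) with hK
  have hKpos : 0 < K := by positivity
  set p : ℝ := (Real.log a + Real.log b)/2 with hp
  set q : ℝ := (Real.log a - Real.log b)/2 with hq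
  set s : ℝ := |2*ν - 1| with hs
  set U : ℝ := |q| with hU
  have hs1 : s ≤ 1 := by rw [hs]; rw [abs_le]; constructor <;> linarith
  have hs0 : 0 ≤ s := abs_nonneg _
  have hU0 : 0 ≤ U := abs_nonneg _
  have hab : a + b = 2 * Real.exp p * Real.cosh U := by
    rw [hU, Real.cosh_abs, Real.cosh_eq]
    rw [show 2 * Real.exp p * ((Real.exp q + Real.exp (-q))/2)
        = Real.exp (p + q) + Real.exp (p - q) by
      rw [show p - q = p + (-q) by ring, Real.exp_add, Real.exp_add]; ring]
    rw [show p + q = Real.log a by rw [hp, hq]; ring,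
        show p - q = Real.log b by rw [hp, hq]; ring,
        Real.exp_log ha, Real.exp_log hb]
  have hheinz : a ^ ν * b ^ (1-ν) + a ^ (1-ν) * b ^ ν
      = 2 * Real.exp p * Real.cosh (s*U) := by
    have h1 : s * U = |(2*ν-1) * q| := by rw [hs, hU, abs_mul]
    rw [h1, Real.cosh_abs, Real.cosh_eq]
    rw [Real.rpow_def_of_pos ha, Real.rpow_def_of_pos hb,
        Real.rpow_def_of_pos ha, Real.rpow_def_of_pos hb,
        ← Real.exp_add, ← Real.exp_add]
    rw [show 2 * Real.exp p * ((Real.exp ((2*ν-1)*q) + Real.exp (-((2*ν-1)*q)))/2)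
        = Real.exp (p + (2*ν-1)*q) + Real.exp (p - (2*ν-1)*q) by
      rw [show p - (2*ν-1)*q = p + (-((2*ν-1)*q)) by ring, Real.exp_add, Real.exp_add]; ring]
    rw [show p + (2*ν-1)*q = Real.log a * ν + Real.log b * (1-ν) by rw [hp, hq]; ring,
        show p - (2*ν-1)*q = Real.log a * (1-ν) + Real.log b * ν by rw [hp, hq]; ring]
  have hexp : Real.exp p = Real.sqrt (a*b) := by
    have h2 : Real.exp p * Real.exp p = a * b := by
      rw [← Real.exp_add, hp, show (Real.log a + Real.log b)/2 + (Real.log a + Real.log b)/2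
          = Real.log a + Real.log b by ring, Real.exp_add, Real.exp_log ha, Real.exp_log hb]
    rw [← h2, Real.sqrt_mul_self (Real.exp_pos _).le]
  have hcoshK : Real.cosh U ≤ K := by
    rw [hK, le_div_iff₀ (by positivity)]
    have h3 := kantorovich m M a b hm ham haM hbm hbM
    have h4 : 0 < Real.sqrt (m*M) := Real.sqrt_pos.mpr (by positivity)
    have h5 : Real.cosh U = (a+b) / (2*Real.exp p) := by
      rw [hab]; field_simp
    rw [h5, hexp, div_mul_eq_mul_div, div_le_iff₀ (by positivity)]
    calc (a+b) * (2*Real.sqrt (m*M)) = ((a+b) * Real.sqrt (m*M)) * 2 := by ring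
      _ ≤ ((M+m) * Real.sqrt (a*b)) * 2 := by linarith
      _ = (M+m) * (2 * Real.sqrt (a*b)) := by ring
  have hK1 : 1 ≤ K := (Real.one_le_cosh U).trans hcoshK
  have hkey : Real.cosh U ^ (s^2) ≤ Real.cosh (s*U) := cosh_rpow_le s U hs0 hs1 hU0
  have hcosh1 : (1:ℝ) ≤ Real.cosh U := Real.one_le_cosh U
  have hsplit : Real.cosh U = Real.cosh U ^ (s^2) * Real.cosh U ^ (1 - s^2) := by
    rw [← Real.rpow_add (by positivity), show s^2 + (1-s^2) = (1:ℝ) by ring, Real.rpow_one]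
  have hexpo : 1 - s^2 ≤ r := by
    have : s^2 = (2*ν-1)^2 := by rw [hs, sq_abs]
    rw [this]; nlinarith
  have h0s : (0:ℝ) ≤ 1 - s^2 := by nlinarith
  have h6 : Real.cosh U ^ (1 - s^2) ≤ K ^ r :=
    (Real.rpow_le_rpow (by positivity) hcoshK h0s).trans
      (Real.rpow_le_rpow_of_exponent_le hK1 hexpo)
  calc a + b = 2 * Real.exp p * Real.cosh U := hab
    _ = 2 * Real.exp p * (Real.cosh U ^ (s^2) * Real.cosh U ^ (1 - s^2)) := by rw [← hsplit]
    _ ≤ 2 * Real.exp p * (Real.cosh (s*U) * K ^ r) := by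
        apply mul_le_mul_of_nonneg_left _ (by positivity)
        exact mul_le_mul hkey h6 (by positivity) (by positivity)
    _ = K ^ r * (2 * Real.exp p * Real.cosh (s*U)) := by ring
    _ = K ^ r * (a ^ ν * b ^ (1-ν) + a ^ (1-ν) * b ^ ν) := by rw [← hheinz]

lemma hsNorm_eq_sum {n : ℕ} (Y : Matrix (Fin n) (Fin n) ℂ) :
    hsNorm Y = Real.sqrt (∑ i, ∑ j, Complex.normSq (Y i j)) := by
  unfold hsNorm
  congr 1
  rw [Matrix.trace]
  simp only [Matrix.diag_apply, Matrix.mul_apply, Matrix.conjTranspose_apply,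
    Complex.mul_conj]
  rw [Complex.re_sum]
  congr 1; funext i
  rw [Complex.re_sum]
  simp [Complex.normSq_apply]

lemma hsNorm_conj_unitary {n : ℕ} (U V Z : Matrix (Fin n) (Fin n) ℂ)
    (hU : U ∈ Matrix.unitaryGroup (Fin n) ℂ) (hV : V ∈ Matrix.unitaryGroup (Fin n) ℂ) :
    hsNorm (U * Z * Vᴴ) = hsNorm Z := by
  unfold hsNorm
  have hV1 : Vᴴ * V = 1 := Matrix.mem_unitaryGroup_iff'.mp hV
  have hU1 : Uᴴ * U = 1 := Matrix.mem_unitaryGroup_iff'.mp hU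
  have key : Matrix.trace (U * Z * Vᴴ * (U * Z * Vᴴ)ᴴ) = Matrix.trace (Z * Zᴴ) :=
    calc Matrix.trace (U * Z * Vᴴ * (U * Z * Vᴴ)ᴴ)
        = Matrix.trace (U * (Z * Zᴴ) * Uᴴ) := by
          rw [show (U * Z * Vᴴ)ᴴ = V * (Zᴴ * Uᴴ) by
            simp [Matrix.conjTranspose_mul, Matrix.star_eq_conjTranspose, Matrix.mul_assoc]]
          rw [show U * Z * Vᴴ * (V * (Zᴴ * Uᴴ)) = U * (Z * ((Vᴴ * V) * (Zᴴ * Uᴴ))) by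
            simp [Matrix.mul_assoc], hV1]
          simp [Matrix.mul_assoc]
      _ = Matrix.trace (Z * Zᴴ) := by
          rw [Matrix.trace_mul_cycle, ← Matrix.mul_assoc, hU1, Matrix.one_mul]
  rw [key]

end aux

theorem matrix_kantorovich_reverse_heinz {n : ℕ} (A B X : Matrix (Fin n) (Fin n) ℂ)
    (hA : A.PosDef) (hB : B.PosDef) (m M : ℝ) (hm : 0 < m) (hmM : m ≤ M)
    (hAm : ∀ i, m ≤ hA.1.eigenvalues i) (hAM : ∀ i, hA.1.eigenvalues i ≤ M)
    (hBm : ∀ i, m ≤ hB.1.eigenvalues i) (hBM : ∀ i, hB.1.eigenvalues i ≤ M)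
    (τ ν : ℝ) (hτ : τ ∈ Set.Ioo (0:ℝ) 1) (hν : ν ∈ Set.Ioo (0:ℝ) 1)
    (h : ν ≤ min τ (1 - τ) ∨ max τ (1 - τ) ≤ ν) :
    hsNorm (A * X + X * B) ≤
      ((M + m) / (2 * Real.sqrt (m * M))) ^ (ν * (1 - ν) / (τ * (1 - τ))) *
        hsNorm (mpow A ν * X * mpow B (1 - ν) + mpow A (1 - ν) * X * mpow B ν) := by
  obtain ⟨hτ0, hτ1⟩ := hτ
  obtain ⟨hν0, hν1⟩ := hν
  have hM : 0 < M := lt_of_lt_of_le hm hmM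
  set K : ℝ := (M + m) / (2 * Real.sqrt (m * M)) with hKdef
  set r : ℝ := ν * (1 - ν) / (τ * (1 - τ)) with hrdef
  set U : Matrix (Fin n) (Fin n) ℂ := (hA.1.eigenvectorUnitary : Matrix (Fin n) (Fin n) ℂ)
    with hUdef
  set V : Matrix (Fin n) (Fin n) ℂ := (hB.1.eigenvectorUnitary : Matrix (Fin n) (Fin n) ℂ)
    with hVdef
  set a : Fin n → ℝ := hA.1.eigenvalues with hadef
  set b : Fin n → ℝ := hB.1.eigenvalues with hbdef
  have hUmem : U ∈ Matrix.unitaryGroup (Fin n) ℂ := hA.1.eigenvectorUnitary.2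
  have hVmem : V ∈ Matrix.unitaryGroup (Fin n) ℂ := hB.1.eigenvectorUnitary.2
  have hUU : Uᴴ * U = 1 := Matrix.mem_unitaryGroup_iff'.mp hUmem
  have hUU' : U * Uᴴ = 1 := Matrix.mem_unitaryGroup_iff.mp hUmem
  have hVV : Vᴴ * V = 1 := Matrix.mem_unitaryGroup_iff'.mp hVmem
  have hVV' : V * Vᴴ = 1 := Matrix.mem_unitaryGroup_iff.mp hVmem
  have hUU2 : ∀ W : Matrix (Fin n) (Fin n) ℂ, Uᴴ * (U * W) = W := fun W => by
    rw [← Matrix.mul_assoc, hUU, Matrix.one_mul]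
  have hVV2 : ∀ W : Matrix (Fin n) (Fin n) ℂ, Vᴴ * (V * W) = W := fun W => by
    rw [← Matrix.mul_assoc, hVV, Matrix.one_mul]
  set Y : Matrix (Fin n) (Fin n) ℂ := Uᴴ * X * V with hYdef
  have hX : X = U * Y * Vᴴ := by
    rw [hYdef]
    calc X = (U * Uᴴ) * X * (V * Vᴴ) := by rw [hUU', hVV', Matrix.one_mul, Matrix.mul_one]
      _ = U * (Uᴴ * X * V) * Vᴴ := by simp only [Matrix.mul_assoc]
  have hspecA : A = U * Matrix.diagonal (fun i => (a i : ℂ)) * Uᴴ := by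
    have := hA.1.spectral_theorem
    rw [← Matrix.star_eq_conjTranspose]
    conv_lhs => rw [this]
    simp only [Unitary.conjStarAlgAut_apply]
    rfl
  have hspecB : B = V * Matrix.diagonal (fun i => (b i : ℂ)) * Vᴴ := by
    have := hB.1.spectral_theorem
    rw [← Matrix.star_eq_conjTranspose]
    conv_lhs => rw [this]
    simp only [Unitary.conjStarAlgAut_apply]
    rfl
  have hmpowA : ∀ t : ℝ, mpow A t
      = U * Matrix.diagonal (fun i => ((a i ^ t : ℝ) : ℂ)) * Uᴴ := fun t => by
    rw [mpow, dif_pos hA.1, ← Matrix.star_eq_conjTranspose]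
  have hmpowB : ∀ t : ℝ, mpow B t
      = V * Matrix.diagonal (fun i => ((b i ^ t : ℝ) : ℂ)) * Vᴴ := fun t => by
    rw [mpow, dif_pos hB.1, ← Matrix.star_eq_conjTranspose]
  -- reduce to diagonal form
  have h1 : A * X + X * B
      = U * (Matrix.diagonal (fun i => (a i : ℂ)) * Y
          + Y * Matrix.diagonal (fun i => (b i : ℂ))) * Vᴴ := by
    rw [hspecA, hspecB]
    conv_lhs => rw [hX]
    simp only [Matrix.mul_add, Matrix.add_mul, Matrix.mul_assoc, hUU2, hVV2]
  have h2 : mpow A ν * X * mpow B (1 - ν) + mpow A (1 - ν) * X * mpow B ν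
      = U * (Matrix.diagonal (fun i => ((a i ^ ν : ℝ) : ℂ)) * Y
              * Matrix.diagonal (fun i => ((b i ^ (1-ν) : ℝ) : ℂ))
          + Matrix.diagonal (fun i => ((a i ^ (1-ν) : ℝ) : ℂ)) * Y
              * Matrix.diagonal (fun i => ((b i ^ ν : ℝ) : ℂ))) * Vᴴ := by
    rw [hmpowA, hmpowA, hmpowB, hmpowB]
    conv_lhs => rw [hX]
    simp only [Matrix.mul_add, Matrix.add_mul, Matrix.mul_assoc, hUU2, hVV2]
  rw [h1, h2, hsNorm_conj_unitary _ _ _ hUmem hVmem, hsNorm_conj_unitary _ _ _ hUmem hVmem]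
  -- now entrywise
  have hr4 : 4 * (ν * (1 - ν)) ≤ r := by
    rw [hrdef, le_div_iff₀ (by nlinarith)]
    nlinarith [sq_nonneg (τ - 1/2), mul_pos hν0 (by linarith : (0:ℝ) < 1 - ν)]
  have hK1 : (1:ℝ) ≤ K := by
    rw [hKdef, le_div_iff₀ (by positivity), one_mul, Real.sqrt_mul hm.le]
    nlinarith [sq_nonneg (Real.sqrt m - Real.sqrt M), Real.sq_sqrt hm.le, Real.sq_sqrt hM.le]
  have hKr : 0 < K ^ r := Real.rpow_pos_of_pos (by linarith) r
  rw [hsNorm_eq_sum, hsNorm_eq_sum]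
  have e1 : ∀ i j, (Matrix.diagonal (fun i => (a i : ℂ)) * Y
      + Y * Matrix.diagonal (fun i => (b i : ℂ))) i j
      = (((a i + b j : ℝ)) : ℂ) * Y i j := fun i j => by
    rw [Matrix.add_apply, Matrix.diagonal_mul, Matrix.mul_diagonal]
    push_cast
    ring
  have e2 : ∀ i j, (Matrix.diagonal (fun i => ((a i ^ ν : ℝ) : ℂ)) * Y
              * Matrix.diagonal (fun i => ((b i ^ (1-ν) : ℝ) : ℂ))
          + Matrix.diagonal (fun i => ((a i ^ (1-ν) : ℝ) : ℂ)) * Y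
              * Matrix.diagonal (fun i => ((b i ^ ν : ℝ) : ℂ))) i j
      = (((a i ^ ν * b j ^ (1-ν) + a i ^ (1-ν) * b j ^ ν : ℝ)) : ℂ) * Y i j := fun i j => by
    rw [Matrix.add_apply, Matrix.mul_diagonal, Matrix.mul_diagonal,
      Matrix.diagonal_mul, Matrix.diagonal_mul]
    push_cast
    ring
  have hsum : (∑ i, ∑ j, Complex.normSq ((Matrix.diagonal (fun i => (a i : ℂ)) * Y
      + Y * Matrix.diagonal (fun i => (b i : ℂ))) i j))
      ≤ (K ^ r)^2 * ∑ i, ∑ j, Complex.normSq ((Matrix.diagonal (fun i => ((a i ^ ν : ℝ) : ℂ)) * Y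
              * Matrix.diagonal (fun i => ((b i ^ (1-ν) : ℝ) : ℂ))
          + Matrix.diagonal (fun i => ((a i ^ (1-ν) : ℝ) : ℂ)) * Y
              * Matrix.diagonal (fun i => ((b i ^ ν : ℝ) : ℂ))) i j) := by
    rw [Finset.mul_sum]
    apply Finset.sum_le_sum
    intro i _
    rw [Finset.mul_sum]
    apply Finset.sum_le_sum
    intro j _
    rw [e1, e2, Complex.normSq_mul, Complex.normSq_mul,
      Complex.normSq_ofReal, Complex.normSq_ofReal]
    have hscalar := scalar_main m M (a i) (b j) ν r hm (hAm i) (hAM i) (hBm j) (hBM j)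
      hν0 hν1 hr4
    have hab0 : 0 ≤ a i + b j := by
      have := hAm i; have := hBm j; linarith
    have hd0 : 0 ≤ a i ^ ν * b j ^ (1-ν) + a i ^ (1-ν) * b j ^ ν := by
      have ha' : (0:ℝ) < a i := lt_of_lt_of_le hm (hAm i)
      have hb' : (0:ℝ) < b j := lt_of_lt_of_le hm (hBm j)
      positivity
    have hsq : (a i + b j) * (a i + b j)
        ≤ (K ^ r * (a i ^ ν * b j ^ (1-ν) + a i ^ (1-ν) * b j ^ ν))
          * (K ^ r * (a i ^ ν * b j ^ (1-ν) + a i ^ (1-ν) * b j ^ ν)) :=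
      mul_le_mul hscalar hscalar hab0 (by positivity)
    nlinarith [Complex.normSq_nonneg (Y i j)]
  calc Real.sqrt (∑ i, ∑ j, Complex.normSq ((Matrix.diagonal (fun i => (a i : ℂ)) * Y
        + Y * Matrix.diagonal (fun i => (b i : ℂ))) i j))
      ≤ Real.sqrt ((K ^ r)^2 * ∑ i, ∑ j, Complex.normSq
          ((Matrix.diagonal (fun i => ((a i ^ ν : ℝ) : ℂ)) * Y
              * Matrix.diagonal (fun i => ((b i ^ (1-ν) : ℝ) : ℂ))
          + Matrix.diagonal (fun i => ((a i ^ (1-ν) : ℝ) : ℂ)) * Y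
              * Matrix.diagonal (fun i => ((b i ^ ν : ℝ) : ℂ))) i j)) :=
        Real.sqrt_le_sqrt hsum
    _ = K ^ r * Real.sqrt (∑ i, ∑ j, Complex.normSq
          ((Matrix.diagonal (fun i => ((a i ^ ν : ℝ) : ℂ)) * Y
              * Matrix.diagonal (fun i => ((b i ^ (1-ν) : ℝ) : ℂ))
          + Matrix.diagonal (fun i => ((a i ^ (1-ν) : ℝ) : ℂ)) * Y
              * Matrix.diagonal (fun i => ((b i ^ ν : ℝ) : ℂ))) i j)) := by
        rw [Real.sqrt_mul (by positivity), Real.sqrt_sq hKr.le]
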